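/- Let p be a prime, and let b : ℕ → ℤ_p and β : ℕ → ℤ_p be sequences with b not identically zero, such that |b_j|_p → 0 as j → ∞, |β_k / k!|_p → 0 as k → ∞ (where β_k/k! ∈ ℚ_p), and such that for every x ∈ ℤ_p the two convergent series agree: Σ_{j=0}^{∞} b_j x^j = Σ_{k=0}^{∞} β_k · binom(x,k). Define V = min_{j} v_p(b_j), let j₀ be the largest index j with v_p(b_j) = V, define V' = min_{k} v_p(β_k / k!), and let k₀ be the largest index k with v_p(β_k/k!) = V' (these extrema exist since the valuations tend to ∞). Then V = V' and j₀ = k₀. -/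

import Mathlib

open Filter

/-- The additive `p`-adic valuation on `ℚ_[p]`, with values in `WithTop ℤ` (`v_p 0 = ∞`). -/
noncomputable def vP (p : ℕ) [Fact p.Prime] (x : ℚ_[p]) : WithTop ℤ :=
  Padic.addValuation x

open scoped fwdDiff

namespace MahlerAux

/-- `T j k = ∑_{i=0}^{k} (-1)^(k-i) C(k,i) i^j`, the `k`-th finite difference of `x^j` at `0`. -/
def T (j k : ℕ) : ℤ :=
  ∑ i ∈ Finset.range (k + 1), (-1) ^ (k - i) * (k.choose i : ℤ) * (i : ℤ) ^ j

/-- Stirling numbers of the second kind (as integers), via the standard recurrence. -/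
def S : ℕ → ℕ → ℤ
  | 0, 0 => 1
  | 0, _ + 1 => 0
  | _ + 1, 0 => 0
  | j + 1, k + 1 => (k + 1) * S j (k + 1) + S j k

lemma S_succ_succ (j k : ℕ) : S (j + 1) (k + 1) = (k + 1) * S j (k + 1) + S j k := rfl

lemma S_eq_zero_of_lt : ∀ {j k : ℕ}, j < k → S j k = 0
  | 0, _ + 1, _ => rfl
  | j + 1, k + 1, h => by
    have h1 : j < k + 1 := by omega
    have h2 : j < k := by omega
    rw [S_succ_succ, S_eq_zero_of_lt h1, S_eq_zero_of_lt h2, mul_zero, add_zero]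

lemma S_diag : ∀ k : ℕ, S k k = 1
  | 0 => rfl
  | k + 1 => by
    rw [S_succ_succ, S_diag k, S_eq_zero_of_lt (Nat.lt_succ_self k), mul_zero, zero_add]

lemma T_zero (k : ℕ) : T 0 k = if k = 0 then 1 else 0 := by
  have h : T 0 k = (-1) ^ k * ∑ i ∈ Finset.range (k + 1), (-1) ^ i * (k.choose i : ℤ) := by
    rw [Finset.mul_sum]
    refine Finset.sum_congr rfl fun i hi => ?_
    have hik : (k - i) + i = k := by
      have := Finset.mem_range.mp hi; omega
    have h2 : ((-1 : ℤ) ^ i) * ((-1) ^ i) = 1 := by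
      rw [← mul_pow]; norm_num
    calc (-1 : ℤ) ^ (k - i) * (k.choose i : ℤ) * (i : ℤ) ^ 0
        = (-1) ^ (k - i) * ((((-1 : ℤ) ^ i) * ((-1) ^ i)) * (k.choose i : ℤ)) := by
          rw [h2, one_mul, pow_zero, mul_one]
      _ = ((-1) ^ (k - i) * (-1) ^ i) * ((-1) ^ i * (k.choose i : ℤ)) := by ring
      _ = (-1) ^ k * ((-1) ^ i * (k.choose i : ℤ)) := by rw [← pow_add, hik]
  rw [h, Int.alternating_sum_range_choose]
  by_cases hk : k = 0
  · subst hk; norm_num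
  · rw [if_neg hk, mul_zero]

lemma T_succ_zero (j : ℕ) : T (j + 1) 0 = 0 := by
  simp [T]

lemma T_succ (j k : ℕ) : T (j + 1) (k + 1) = (k + 1) * (T j (k + 1) + T j k) := by
  have key : ∀ i ∈ Finset.range (k + 2),
      (-1 : ℤ) ^ (k + 1 - i) * ((k + 1).choose i : ℤ) * (i : ℤ) ^ (j + 1)
      = (k + 1) * ((-1) ^ (k + 1 - i) * ((k + 1).choose i : ℤ) * (i : ℤ) ^ j)
        - (k + 1) * ((-1) ^ (k + 1 - i) * (k.choose i : ℤ) * (i : ℤ) ^ j) := by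
    intro i hi
    have hik : i ≤ k + 1 := by
      have := Finset.mem_range.mp hi; omega
    have h := Nat.choose_mul_succ_eq k i
    have hcast : ((k + 1 - i : ℕ) : ℤ) = (k : ℤ) + 1 - i := by omega
    have h' : (k.choose i : ℤ) * ((k : ℤ) + 1)
        = ((k + 1).choose i : ℤ) * (((k + 1 - i : ℕ) : ℤ)) := by exact_mod_cast h
    rw [hcast] at h'
    have hcc : (i : ℤ) * ((k + 1).choose i : ℤ)
        = (k + 1) * ((k + 1).choose i : ℤ) - (k + 1) * (k.choose i : ℤ) := by
      linear_combination h'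
    calc (-1 : ℤ) ^ (k + 1 - i) * ((k + 1).choose i : ℤ) * (i : ℤ) ^ (j + 1)
        = (-1) ^ (k + 1 - i) * ((i : ℤ) * ((k + 1).choose i : ℤ)) * (i : ℤ) ^ j := by ring
      _ = _ := by rw [hcc]; ring
  have h2 : ∑ i ∈ Finset.range (k + 2), (-1 : ℤ) ^ (k + 1 - i) * (k.choose i : ℤ) * (i : ℤ) ^ j
      = -T j k := by
    rw [Finset.sum_range_succ, Nat.choose_eq_zero_of_lt (Nat.lt_succ_self k)]
    rw [T, ← Finset.sum_neg_distrib]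
    simp only [Nat.cast_zero, mul_zero, zero_mul, add_zero]
    refine Finset.sum_congr rfl fun i hi => ?_
    have hik : i ≤ k := Nat.lt_succ_iff.mp (Finset.mem_range.mp hi)
    have hs : k + 1 - i = (k - i) + 1 := by omega
    rw [hs, pow_succ]
    ring
  calc T (j + 1) (k + 1)
      = ∑ i ∈ Finset.range (k + 2),
          ((k + 1 : ℤ) * ((-1) ^ (k + 1 - i) * ((k + 1).choose i : ℤ) * (i : ℤ) ^ j)
            - (k + 1) * ((-1) ^ (k + 1 - i) * (k.choose i : ℤ) * (i : ℤ) ^ j)) :=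
        Finset.sum_congr rfl key
    _ = (k + 1) * T j (k + 1)
        - (k + 1) * ∑ i ∈ Finset.range (k + 2),
            (-1 : ℤ) ^ (k + 1 - i) * (k.choose i : ℤ) * (i : ℤ) ^ j := by
        rw [Finset.sum_sub_distrib, ← Finset.mul_sum, ← Finset.mul_sum]; rfl
    _ = (k + 1) * (T j (k + 1) + T j k) := by rw [h2]; ring

lemma T_eq (j : ℕ) : ∀ k : ℕ, T j k = (k.factorial : ℤ) * S j k := by
  induction j with
  | zero =>
    intro k
    cases k with
    | zero => simp [T_zero, S]
    | succ k => simp [T_zero, S]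
  | succ j ih =>
    intro k
    cases k with
    | zero => simp [T_succ_zero, S]
    | succ k =>
      rw [T_succ, ih, ih, S_succ_succ]
      push_cast [Nat.factorial_succ]
      ring

end MahlerAux

instance (p : ℕ) [Fact p.Prime] : IsBoundedSMul ℤ_[p] ℚ_[p] :=
  IsBoundedSMul.of_norm_smul_le fun r x => by rw [Algebra.smul_def, norm_mul]; rfl

open MahlerAux in
/-- Suppose the power series `∑ b_j x^j` and the Mahler series
`∑ β_k binom(x,k)` (with coefficients in `ℤ_p`, both converging on `ℤ_p`) agree for every
`x ∈ ℤ_p`, with `b` not identically zero.  If `V = min_j v_p(b_j)` is attained last at `j₀`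
and `V' = min_k v_p(β_k/k!)` is attained last at `k₀`, then `V = V'` and `j₀ = k₀`. -/
theorem mahler_power_series_minimal_valuation (p : ℕ) [hp : Fact p.Prime]
    (b β : ℕ → ℤ_[p]) (hb_ne : ∃ j, b j ≠ 0)
    (hb : Tendsto (fun j => ‖b j‖) atTop (nhds 0))
    (hβ : Tendsto (fun k => ‖(β k : ℚ_[p]) / (Nat.factorial k : ℚ_[p])‖) atTop (nhds 0))
    (hagree : ∀ x : ℤ_[p], ∑' j : ℕ, b j * x ^ j = ∑' k : ℕ, β k * Ring.choose x k)
    (j₀ : ℕ) (hj₀min : ∀ j : ℕ, vP p (b j₀ : ℚ_[p]) ≤ vP p (b j : ℚ_[p]))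
    (hj₀max : ∀ j : ℕ, j₀ < j → vP p (b j₀ : ℚ_[p]) < vP p (b j : ℚ_[p]))
    (k₀ : ℕ)
    (hk₀min : ∀ k : ℕ, vP p ((β k₀ : ℚ_[p]) / (Nat.factorial k₀ : ℚ_[p])) ≤
        vP p ((β k : ℚ_[p]) / (Nat.factorial k : ℚ_[p])))
    (hk₀max : ∀ k : ℕ, k₀ < k → vP p ((β k₀ : ℚ_[p]) / (Nat.factorial k₀ : ℚ_[p])) <
        vP p ((β k : ℚ_[p]) / (Nat.factorial k : ℚ_[p]))) :
    vP p (b j₀ : ℚ_[p]) = vP p ((β k₀ : ℚ_[p]) / (Nat.factorial k₀ : ℚ_[p])) ∧ j₀ = k₀ := by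
  classical
  have hp1R : (1 : ℝ) < p := by exact_mod_cast hp.out.one_lt
  have hfact_ne : ∀ k : ℕ, ((k.factorial : ℚ_[p])) ≠ 0 := fun k =>
    Nat.cast_ne_zero.mpr k.factorial_ne_zero
  -- translation between `vP` and norms
  have hvP0 : vP p (0 : ℚ_[p]) = ⊤ := by
    rw [vP, Padic.addValuation, AddValuation.of_apply]
    exact Padic.AddValuation.map_zero
  have hvPx : ∀ x : ℚ_[p], x ≠ 0 → vP p x = (x.valuation : WithTop ℤ) := fun x hx =>
    Padic.addValuation.apply hx
  have hvle : ∀ x y : ℚ_[p], (vP p x ≤ vP p y ↔ ‖y‖ ≤ ‖x‖) := by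
    intro x y
    rcases eq_or_ne y 0 with rfl | hy
    · rw [hvP0]
      exact iff_of_true le_top (by simpa using norm_nonneg x)
    rcases eq_or_ne x 0 with rfl | hx
    · rw [hvP0, hvPx y hy]
      simp only [top_le_iff, norm_zero]
      constructor
      · intro h; exact absurd h (by simp)
      · intro h; exact absurd (le_antisymm h (norm_nonneg y)) (norm_ne_zero_iff.mpr hy)
    · rw [hvPx x hx, hvPx y hy, Padic.norm_eq_zpow_neg_valuation hx, Padic.norm_eq_zpow_neg_valuation hy,
        WithTop.coe_le_coe, zpow_le_zpow_iff_right₀ hp1R, neg_le_neg_iff]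
  have hvlt : ∀ x y : ℚ_[p], (vP p x < vP p y ↔ ‖y‖ < ‖x‖) := by
    intro x y
    rw [lt_iff_not_ge, hvle y x, lt_iff_not_ge]
  -- summability criteria
  have summable_Q : ∀ {f : ℕ → ℚ_[p]},
      Tendsto (fun n => ‖f n‖) atTop (nhds 0) → Summable f := by
    intro f h
    apply NonarchimedeanAddGroup.summable_of_tendsto_cofinite_zero
    rw [Nat.cofinite_eq_atTop]
    exact tendsto_zero_iff_norm_tendsto_zero.mpr h
  have summable_Z : ∀ {f : ℕ → ℤ_[p]},
      Tendsto (fun n => ‖f n‖) atTop (nhds 0) → Summable f := by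
    intro f h
    apply NonarchimedeanAddGroup.summable_of_tendsto_cofinite_zero
    rw [Nat.cofinite_eq_atTop]
    exact tendsto_zero_iff_norm_tendsto_zero.mpr h
  -- coercion of tsum
  have coe_tsum : ∀ (f : ℕ → ℤ_[p]), Summable f →
      ((∑' n, f n : ℤ_[p]) : ℚ_[p]) = ∑' n, (f n : ℚ_[p]) := by
    intro f hf
    exact ((hf.hasSum.map (PadicInt.Coe.ringHom (p := p)).toAddMonoidHom
      continuous_subtype_val).tsum_eq).symm
  -- `β` tends to zero in norm
  have hβ' : ∀ k : ℕ, ‖(β k : ℚ_[p])‖ ≤ ‖(β k : ℚ_[p]) / (k.factorial : ℚ_[p])‖ := by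
    intro k
    conv_lhs => rw [← div_mul_cancel₀ (β k : ℚ_[p]) (hfact_ne k)]
    rw [norm_mul]
    refine mul_le_of_le_one_right (norm_nonneg _) ?_
    have := Padic.norm_int_le_one (p := p) (k.factorial : ℤ)
    exact_mod_cast this
  have hβQ : Tendsto (fun k => ‖(β k : ℚ_[p])‖) atTop (nhds 0) :=
    squeeze_zero (fun k => norm_nonneg _) hβ' hβ
  have hβ0 : Tendsto (fun k => (β k : ℚ_[p])) atTop (nhds 0) :=
    tendsto_zero_iff_norm_tendsto_zero.mpr hβQ
  -- summability of the two series in `ℤ_[p]`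
  have hsum_mahl : ∀ x : ℤ_[p], Summable fun k => β k * Ring.choose x k := by
    intro x
    refine summable_Z (squeeze_zero (g := fun k => ‖β k‖) (fun k => norm_nonneg _) (fun k => ?_) hβQ)
    rw [norm_mul]
    exact mul_le_of_le_one_right (norm_nonneg _) (PadicInt.norm_le_one _)
  have hsum_pow : ∀ x : ℤ_[p], Summable fun j => b j * x ^ j := by
    intro x
    refine summable_Z (squeeze_zero (fun j => norm_nonneg _) (fun j => ?_) hb)
    rw [norm_mul]
    exact mul_le_of_le_one_right (norm_nonneg _) (PadicInt.norm_le_one _)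
  -- the Mahler series of `β` as a continuous function
  set F : C(ℤ_[p], ℚ_[p]) := PadicInt.mahlerSeries (fun k => (β k : ℚ_[p])) with hF_def
  have hFβ : ∀ n : ℕ, (fwdDiff (1 : ℤ_[p]))^[n] (⇑F) (0 : ℤ_[p]) = (β n : ℚ_[p]) := fun n =>
    PadicInt.fwdDiff_mahlerSeries hβ0 n
  have hFx : ∀ x : ℤ_[p], F x = ((∑' j, b j * x ^ j : ℤ_[p]) : ℚ_[p]) := by
    intro x
    rw [hF_def, PadicInt.mahlerSeries_apply hβ0 x, hagree x, coe_tsum _ (hsum_mahl x)]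
    refine tsum_congr fun n => ?_
    rw [mahler_apply, Algebra.smul_def, PadicInt.algebraMap_apply, PadicInt.coe_mul, mul_comm]
  have hFi : ∀ i : ℕ, F ((i : ℕ) : ℤ_[p]) = ∑' j, (b j : ℚ_[p]) * ((i : ℚ_[p])) ^ j := by
    intro i
    rw [hFx, coe_tsum _ (hsum_pow _)]
    refine tsum_congr fun j => ?_
    rw [PadicInt.coe_mul, PadicInt.coe_pow, PadicInt.coe_natCast]
  -- summability of power series terms in `ℚ_[p]` at naturals
  have hsum_powQ : ∀ i : ℕ, Summable fun j => (b j : ℚ_[p]) * (i : ℚ_[p]) ^ j := by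
    intro i
    refine summable_Q (squeeze_zero (fun j => norm_nonneg _) (fun j => ?_) hb)
    rw [norm_mul, norm_pow]
    refine mul_le_of_le_one_right (norm_nonneg _) (pow_le_one₀ (norm_nonneg _) ?_)
    have := Padic.norm_int_le_one (p := p) (i : ℤ)
    exact_mod_cast this
  -- key identity : `β k / k! = ∑' j, b j * S j k`
  have hSle1 : ∀ j k : ℕ, ‖((S j k : ℤ) : ℚ_[p])‖ ≤ 1 := fun j k =>
    Padic.norm_int_le_one _
  have hterm_le : ∀ j k : ℕ, ‖(b j : ℚ_[p]) * ((S j k : ℤ) : ℚ_[p])‖ ≤ ‖(b j : ℚ_[p])‖ := by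
    intro j k
    rw [norm_mul]
    exact mul_le_of_le_one_right (norm_nonneg _) (hSle1 j k)
  have hsum_S : ∀ k : ℕ, Summable fun j => (b j : ℚ_[p]) * ((S j k : ℤ) : ℚ_[p]) := by
    intro k
    exact summable_Q (squeeze_zero (fun j => norm_nonneg _) (fun j => hterm_le j k) hb)
  have hc : ∀ k : ℕ, (β k : ℚ_[p]) / (Nat.factorial k : ℚ_[p])
      = ∑' j, (b j : ℚ_[p]) * ((S j k : ℤ) : ℚ_[p]) := by
    intro k
    have hβk : (β k : ℚ_[p]) = ∑' j, (b j : ℚ_[p]) * ((T j k : ℤ) : ℚ_[p]) := by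
      have step1 : (β k : ℚ_[p]) = ∑ i ∈ Finset.range (k + 1),
          (((-1 : ℤ) ^ (k - i) * (k.choose i : ℤ)) : ℤ) •
            (∑' j, (b j : ℚ_[p]) * (i : ℚ_[p]) ^ j) := by
        rw [← hFβ k, fwdDiff_iter_eq_sum_shift]
        refine Finset.sum_congr rfl fun i _ => ?_
        have hx : (0 : ℤ_[p]) + i • (1 : ℤ_[p]) = ((i : ℕ) : ℤ_[p]) := by
          simp [nsmul_eq_mul]
        rw [hx, hFi i]
      rw [step1]
      have step2 : ∀ i ∈ Finset.range (k + 1),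
          (((-1 : ℤ) ^ (k - i) * (k.choose i : ℤ)) : ℤ) •
            (∑' j, (b j : ℚ_[p]) * (i : ℚ_[p]) ^ j)
          = ∑' j, ((((-1 : ℤ) ^ (k - i) * (k.choose i : ℤ) : ℤ)) : ℚ_[p]) *
              ((b j : ℚ_[p]) * (i : ℚ_[p]) ^ j) := by
        intro i _
        rw [zsmul_eq_mul, tsum_mul_left]
      rw [Finset.sum_congr rfl step2]
      rw [← Summable.tsum_finsetSum (fun i _ => Summable.mul_left _ (hsum_powQ i))]
      refine tsum_congr fun j => ?_
      rw [T]
      push_cast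
      rw [Finset.mul_sum]
      refine Finset.sum_congr rfl fun i _ => ?_
      ring
    have hβk2 : (β k : ℚ_[p])
        = (k.factorial : ℚ_[p]) * ∑' j, (b j : ℚ_[p]) * ((S j k : ℤ) : ℚ_[p]) := by
      rw [hβk, ← tsum_mul_left]
      refine tsum_congr fun j => ?_
      rw [T_eq]
      push_cast
      ring
    rw [div_eq_iff (hfact_ne k), hβk2]
    ring
  -- `b j₀ ≠ 0`
  have hbj₀ne : (b j₀ : ℚ_[p]) ≠ 0 := by
    obtain ⟨j, hj⟩ := hb_ne
    have h1 : ‖(b j : ℚ_[p])‖ ≤ ‖(b j₀ : ℚ_[p])‖ := (hvle _ _).mp (hj₀min j)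
    have h2 : (0 : ℝ) < ‖(b j : ℚ_[p])‖ := by
      rw [norm_pos_iff]
      exact (PadicInt.coe_ne_zero).mpr hj
    exact norm_pos_iff.mp (lt_of_lt_of_le h2 h1)
  set N : ℝ := ‖(b j₀ : ℚ_[p])‖ with hN_def
  set v₀ : ℤ := (b j₀ : ℚ_[p]).valuation with hv₀_def
  have hNv : N = (p : ℝ) ^ (-v₀) := Padic.norm_eq_zpow_neg_valuation hbj₀ne
  have hNpos : (0 : ℝ) < N := norm_pos_iff.mpr hbj₀ne
  have hsmall : ∀ x : ℚ_[p], ‖x‖ < N → ‖x‖ ≤ (p : ℝ) ^ (-v₀ - 1) := by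
    intro x hx
    rw [hNv] at hx
    have : ‖x‖ < (p : ℝ) ^ ((-v₀ - 1) + 1) := by
      rw [show (-v₀ - 1) + 1 = -v₀ by ring]; exact hx
    exact (Padic.norm_le_pow_iff_norm_lt_pow_add_one x (-v₀ - 1)).mpr this
  have hP1N : (p : ℝ) ^ (-v₀ - 1) < N := by
    rw [hNv]
    exact zpow_lt_zpow_right₀ hp1R (by omega)
  have hP1nonneg : (0 : ℝ) ≤ (p : ℝ) ^ (-v₀ - 1) :=
    zpow_nonneg (by positivity) _
  have hj_le : ∀ j : ℕ, ‖(b j : ℚ_[p])‖ ≤ N := fun j => (hvle _ _).mp (hj₀min j)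
  have hj_lt : ∀ j : ℕ, j₀ < j → ‖(b j : ℚ_[p])‖ < N := fun j hj =>
    (hvlt _ _).mp (hj₀max j hj)
  -- (i) all Mahler coefficients have norm ≤ N
  have hckle : ∀ k : ℕ, ‖(β k : ℚ_[p]) / (Nat.factorial k : ℚ_[p])‖ ≤ N := by
    intro k
    rw [hc k]
    exact IsUltrametricDist.norm_tsum_le_of_forall_le_of_nonneg hNpos.le
      (fun j => (hterm_le j k).trans (hj_le j))
  -- (ii) strictly smaller for k > j₀
  have hcklt : ∀ k : ℕ, j₀ < k →
      ‖(β k : ℚ_[p]) / (Nat.factorial k : ℚ_[p])‖ ≤ (p : ℝ) ^ (-v₀ - 1) := by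
    intro k hk
    rw [hc k]
    refine IsUltrametricDist.norm_tsum_le_of_forall_le_of_nonneg hP1nonneg (fun j => ?_)
    rcases lt_or_ge j k with hjk | hjk
    · rw [S_eq_zero_of_lt hjk]
      simpa using hP1nonneg
    · exact (hterm_le j k).trans (hsmall _ (hj_lt j (lt_of_lt_of_le hk hjk)))
  -- (iii) `‖c j₀‖ = N`
  have hcj₀ : ‖(β j₀ : ℚ_[p]) / (Nat.factorial j₀ : ℚ_[p])‖ = N := by
    rw [hc j₀]
    have hsplit := Summable.sum_add_tsum_nat_add (f := fun j => (b j : ℚ_[p]) * ((S j j₀ : ℤ) : ℚ_[p]))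
      (j₀ + 1) (hsum_S j₀)
    have hhead : ∑ j ∈ Finset.range (j₀ + 1), (b j : ℚ_[p]) * ((S j j₀ : ℤ) : ℚ_[p])
        = (b j₀ : ℚ_[p]) := by
      rw [Finset.sum_eq_single j₀]
      · rw [S_diag]; simp
      · intro j hj hne
        have hjlt : j < j₀ := by
          have := Finset.mem_range.mp hj; omega
        rw [S_eq_zero_of_lt hjlt]; simp
      · intro h; exact absurd (Finset.self_mem_range_succ j₀) h
    have htail : ‖∑' j, (b (j + (j₀ + 1)) : ℚ_[p]) * ((S (j + (j₀ + 1)) j₀ : ℤ) : ℚ_[p])‖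
        ≤ (p : ℝ) ^ (-v₀ - 1) := by
      refine IsUltrametricDist.norm_tsum_le_of_forall_le_of_nonneg hP1nonneg (fun j => ?_)
      exact (hterm_le _ _).trans (hsmall _ (hj_lt _ (by omega)))
    rw [← hsplit, hhead]
    have hne : ‖(b j₀ : ℚ_[p])‖
        ≠ ‖∑' j, (b (j + (j₀ + 1)) : ℚ_[p]) * ((S (j + (j₀ + 1)) j₀ : ℤ) : ℚ_[p])‖ := by
      intro h
      exact absurd (h ▸ (htail.trans_lt hP1N)) (lt_irrefl _)
    rw [Padic.add_eq_max_of_ne hne]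
    exact max_eq_left ((htail.trans hP1N.le))
  -- `‖c k₀‖ = N`
  have hck₀ : ‖(β k₀ : ℚ_[p]) / (Nat.factorial k₀ : ℚ_[p])‖ = N := by
    refine le_antisymm (hckle k₀) ?_
    have := (hvle _ _).mp (hk₀min j₀)
    rw [hcj₀] at this
    exact this
  constructor
  · -- equality of valuations
    refine le_antisymm ((hvle _ _).mpr ?_) ?_
    · rw [hck₀]
    · have h2 : ‖(b j₀ : ℚ_[p])‖ ≤ ‖(β k₀ : ℚ_[p]) / (Nat.factorial k₀ : ℚ_[p])‖ := by
        rw [hck₀]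
      exact (hvle _ _).mpr h2
  · -- `j₀ = k₀`
    refine le_antisymm ?_ ?_
    · -- `j₀ ≤ k₀`
      by_contra h
      push_neg at h
      have := (hvlt _ _).mp (hk₀max j₀ h)
      rw [hcj₀, hck₀] at this
      exact absurd this (lt_irrefl N)
    · -- `k₀ ≤ j₀`
      by_contra h
      push_neg at h
      have := (hcklt k₀ h).trans_lt hP1N
      rw [hck₀] at this
      exact absurd this (lt_irrefl N)
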